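/- Let K have characteristic 0, Q ∈ GL(V), and let π_Q be the operator on Q-invariant m-linear forms defined by π_Q(w)(X₁,...,X_m) = Σ_{k=1}^{m} w(Q X_k,...,Q X_m, X₁,...,X_{k-1}). Then (1/m)·π_Q is a projection of the space of Q-invariant m-linear forms onto the subspace of Q-twisted-cyclic m-linear forms; in particular, if w is Q-twisted cyclic then (1/m)π_Q(w) = w. -/
import Mathlib


/-- The twisted cyclic shift: `(X₁, …, X_M) ↦ (Q X_M, X₁, …, X_{M-1})`. -/
def cycOp {K V : Type*} [Field K] [AddCommGroup V] [Module K V] {m : ℕ}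
    (Q : V ≃ₗ[K] V) (X : Fin (m + 1) → V) : Fin (m + 1) → V :=
  Fin.cons (Q (X (Fin.last m))) (Fin.init X)

/-- `π_Q(f)(X₁,…,X_M) = Σ_{k=1}^{M} f(Q X_k, …, Q X_M, X₁, …, X_{k-1})`. -/
def piQ {K V : Type*} [Field K] [AddCommGroup V] [Module K V] {m : ℕ}
    (Q : V ≃ₗ[K] V) (f : (Fin (m + 1) → V) → K) : (Fin (m + 1) → V) → K :=
  fun X => ∑ k ∈ Finset.range (m + 1), f ((cycOp Q)^[k + 1] X)

/-- `(1/M) ⬝ π_Q`. -/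
def projQ {K V : Type*} [Field K] [AddCommGroup V] [Module K V] {m : ℕ}
    (Q : V ≃ₗ[K] V) (f : (Fin (m + 1) → V) → K) : (Fin (m + 1) → V) → K :=
  fun X => ((m + 1 : K))⁻¹ * piQ Q f X

section Aux

variable {K V : Type*} [Field K] [AddCommGroup V] [Module K V] {m : ℕ} (Q : V ≃ₗ[K] V)

lemma cycOp_apply' (X : Fin (m+1) → V) (j : Fin (m+1)) :
    cycOp Q X j = if _h : (j : ℕ) = 0 then Q (X (Fin.last m)) else X ⟨(j:ℕ) - 1, by omega⟩ := by
  induction j using Fin.cases with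
  | zero => simp [cycOp]
  | succ j' =>
    simp only [cycOp, Fin.cons_succ, Fin.init, Fin.val_succ]
    rw [dif_neg (by omega)]
    exact congrArg X (Fin.ext (by simp))

lemma cycOp_iterate (k : ℕ) (hk : k ≤ m + 1) (X : Fin (m+1) → V) (i : Fin (m+1)) :
    (cycOp Q)^[k] X i =
      if h : (i : ℕ) < k then Q (X ⟨(i : ℕ) + (m+1) - k, by omega⟩)
      else X ⟨(i:ℕ) - k, by omega⟩ := by
  induction k generalizing X with
  | zero => simp
  | succ k ih =>
    rw [Function.iterate_succ_apply, ih (by omega)]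
    by_cases h1 : (i : ℕ) < k
    · rw [dif_pos h1, dif_pos (by omega), cycOp_apply', dif_neg (by simp; omega)]
      exact congrArg (fun t => Q (X t)) (Fin.ext (by simp; omega))
    · rw [dif_neg h1, cycOp_apply']
      by_cases h2 : (i : ℕ) = k
      · rw [dif_pos (by simp; omega), dif_pos (by omega)]
        exact congrArg (fun t => Q (X t)) (Fin.ext (by simp [Fin.last]; omega))
      · rw [dif_neg (by simp; omega), dif_neg (by omega)]
        exact congrArg X (Fin.ext (by simp; omega))

lemma cycOp_top (X : Fin (m+1) → V) : (cycOp Q)^[m+1] X = fun i => Q (X i) := by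
  funext i
  rw [cycOp_iterate Q (m+1) le_rfl, dif_pos i.isLt]
  exact congrArg (fun t => Q (X t)) (Fin.ext (by simp))

lemma piQ_cyc (w : (Fin (m+1) → V) → K) (hw : ∀ X, w X = w (fun i => Q (X i)))
    (X : Fin (m+1) → V) : piQ Q w (cycOp Q X) = piQ Q w X := by
  unfold piQ
  have e1 : ∑ k ∈ Finset.range (m+1), w ((cycOp Q)^[k+1] (cycOp Q X))
      = ∑ k ∈ Finset.range (m+1), w ((cycOp Q)^[k+2] X) :=
    Finset.sum_congr rfl fun k _ =>
      (congrArg w (Function.iterate_succ_apply (cycOp Q) (k+1) X)).symm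
  rw [e1, Finset.sum_range_succ,
    Finset.sum_range_succ' (fun k => w ((cycOp Q)^[k+1] X)) m]
  congr 1
  rw [Function.iterate_succ_apply, cycOp_top, ← hw]
  simp

lemma iter_inv {f : (Fin (m+1) → V) → K} (h : ∀ X, f X = f (cycOp Q X)) :
    ∀ n X, f ((cycOp Q)^[n] X) = f X := by
  intro n
  induction n with
  | zero => simp
  | succ n ih =>
    intro X
    rw [Function.iterate_succ_apply, ih]
    exact (h X).symm

end Aux

/-- In characteristic `0`, `(1/M)·π_Q` is a projection of the
`Q`-invariant `M`-linear forms onto the `Q`-twisted-cyclic ones: for `Q`-invariant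
`w` the form `(1/M)π_Q(w)` is `Q`-twisted cyclic and `(1/M)π_Q` is idempotent on it,
and if `w` is `Q`-twisted cyclic then `(1/M)π_Q(w) = w`. -/
theorem stmt_4 {K V : Type*} [Field K] [CharZero K] [AddCommGroup V] [Module K V]
    {m : ℕ} (hm : 1 ≤ m) (Q : V ≃ₗ[K] V) :
    (∀ w : MultilinearMap K (fun _ : Fin (m + 1) => V) K,
      (∀ X, w X = w (fun i => Q (X i))) →
        (∀ X, projQ Q ⇑w X = projQ Q ⇑w (cycOp Q X)) ∧
        (∀ X, projQ Q (projQ Q ⇑w) X = projQ Q ⇑w X)) ∧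
    (∀ w : MultilinearMap K (fun _ : Fin (m + 1) => V) K,
      (∀ X, w X = w (cycOp Q X)) → ∀ X, projQ Q ⇑w X = w X) := by
  have hne : ((m : K) + 1) ≠ 0 := Nat.cast_add_one_ne_zero m
  have key : ∀ f : (Fin (m+1) → V) → K, (∀ X, f X = f (cycOp Q X)) →
      ∀ X, projQ Q f X = f X := by
    intro f hf X
    unfold projQ piQ
    rw [Finset.sum_congr rfl fun k _ => iter_inv Q hf (k+1) X, Finset.sum_const,
      Finset.card_range, nsmul_eq_mul, ← mul_assoc]
    push_cast
    rw [inv_mul_cancel₀ hne, one_mul]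
  constructor
  · intro w hw
    have hcyc : ∀ X, projQ Q ⇑w X = projQ Q ⇑w (cycOp Q X) := by
      intro X
      unfold projQ
      rw [piQ_cyc Q ⇑w hw X]
    exact ⟨hcyc, fun X => key _ hcyc X⟩
  · intro w hw X
    exact key ⇑w hw X
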